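/- arXiv:2204.00595 — 3 statements merged into one kernel-verified Lean document; each statement's English description precedes it below -/
import Mathlib

section
/- Let m ≥ 2 be an integer, n = m², ω = exp(−2πi/n), and let F be the n×n discrete Fourier transform matrix over ℂ with F[j,k] = ω^{jk} (0-based indices). Then F · P_{(m,n)} is a Monarch matrix; that is, there exist L ∈ DB(m,n) and R ∈ BD(m,n) such that F = L · R · P_{(m,n)} (using that P_{(m,m²)} is a symmetric involution). -/
open Matrix

/-- `BD b n R`: `R` is block-diagonal with `n/b` diagonal blocks of size `b × b`. -/
def BD (b n : ℕ) (R : Matrix (Fin n) (Fin n) ℂ) : Prop :=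
  ∀ i j : Fin n, i.val / b ≠ j.val / b → R i j = 0

/-- `DB b n L`: `L[i,j] = 0` whenever `i ≢ j (mod b)`. -/
def DB (b n : ℕ) (L : Matrix (Fin n) (Fin n) ℂ) : Prop :=
  ∀ i j : Fin n, i.val % b ≠ j.val % b → L i j = 0

/-- The permutation matrix `P_{(b,n)}`. -/
def permMat (b n : ℕ) : Matrix (Fin n) (Fin n) ℂ :=
  Matrix.of fun i j => if i.val = j.val % b * (n / b) + j.val / b then 1 else 0

lemma monarch_split (m a b c d : ℕ) :
    (m*a+b)*(m*c+d) = (m*a+b)*d + m*b*c + m*m*(a*c) := by ring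

lemma monarch_mod (m x y : ℕ) (hy : y < m) : (x * m + y) % m = y := by
  rw [add_comm, Nat.add_mul_mod_self_right, Nat.mod_eq_of_lt hy]

lemma monarch_div (m x y : ℕ) (hm : 0 < m) (hy : y < m) : (x * m + y) / m = x := by
  rw [add_comm, Nat.add_mul_div_right _ _ hm, Nat.div_eq_of_lt hy, zero_add]

/-- for `n = m²` and the DFT matrix `F[j,k] = ω^{jk}` with
`ω = exp(−2πi/n)`, the matrix `F · P_{(m,n)}` is a Monarch matrix; equivalently
`F = L · R · P_{(m,n)}` for some `L ∈ DB(m,n)` and `R ∈ BD(m,n)`. -/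
theorem dft_times_perm_is_monarch (m : ℕ) (hm : 2 ≤ m)
    (F : Matrix (Fin (m * m)) (Fin (m * m)) ℂ)
    (hF : ∀ j k : Fin (m * m),
      F j k = Complex.exp (-2 * (Real.pi : ℂ) * Complex.I / ((m : ℂ) * (m : ℂ)))
        ^ (j.val * k.val)) :
    ∃ L R : Matrix (Fin (m * m)) (Fin (m * m)) ℂ,
      DB m (m * m) L ∧ BD m (m * m) R ∧ F = L * R * permMat m (m * m) := by
  have hm0 : 0 < m := by omega
  set ω : ℂ := Complex.exp (-2 * (Real.pi : ℂ) * Complex.I / ((m : ℂ) * (m : ℂ))) with hω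
  have hωn : ω ^ (m * m) = 1 := by
    rw [hω, ← Complex.exp_nat_mul]
    have hne : ((m : ℂ) * (m : ℂ)) ≠ 0 := by
      have : (m : ℂ) ≠ 0 := Nat.cast_ne_zero.mpr (by omega)
      exact mul_ne_zero this this
    have : ((m * m : ℕ) : ℂ) * (-2 * (Real.pi : ℂ) * Complex.I / ((m : ℂ) * (m : ℂ)))
        = -(2 * (Real.pi : ℂ) * Complex.I) := by
      push_cast
      field_simp
      ring_nf
      simp [show (m : ℂ) ≠ 0 from Nat.cast_ne_zero.mpr (by omega)]
    rw [this, Complex.exp_neg, Complex.exp_two_pi_mul_I, inv_one]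
  refine ⟨Matrix.of fun j i => if j.val % m = i.val % m then ω ^ (j.val * (i.val / m)) else 0,
      Matrix.of fun i k => if i.val / m = k.val / m then ω ^ (m * (i.val % m) * (k.val % m)) else 0,
      ?_, ?_, ?_⟩
  · intro i j h
    simp only [Matrix.of_apply, if_neg h]
  · intro i j h
    simp only [Matrix.of_apply, if_neg h]
  · ext j k
    rw [hF, Matrix.mul_apply]
    have hkm : k.val / m < m := (Nat.div_lt_iff_lt_mul hm0).mpr k.isLt
    have hjm : j.val % m < m := Nat.mod_lt _ hm0
    have hkmm : k.val % m < m := Nat.mod_lt _ hm0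
    have hi0lt : k.val % m * m + k.val / m < m * m := by
      calc k.val % m * m + k.val / m < k.val % m * m + m := by omega
        _ = (k.val % m + 1) * m := by ring
        _ ≤ m * m := by nlinarith
    set i0 : Fin (m * m) := ⟨k.val % m * m + k.val / m, hi0lt⟩ with hi0
    have hmm : m * m / m = m := Nat.mul_div_cancel _ hm0
    have hi0mod : (i0 : ℕ) % m = k.val / m := monarch_mod m _ _ hkm
    have hi0div : (i0 : ℕ) / m = k.val % m := monarch_div m _ _ hm0 hkm
    rw [Finset.sum_eq_single i0]
    · have hP : permMat m (m * m) i0 k = 1 := by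
        simp [permMat, hmm, hi0]
      rw [hP, mul_one, Matrix.mul_apply]
      have ht0lt : k.val % m * m + j.val % m < m * m := by
        calc k.val % m * m + j.val % m < k.val % m * m + m := by omega
          _ = (k.val % m + 1) * m := by ring
          _ ≤ m * m := by nlinarith
      set t0 : Fin (m * m) := ⟨k.val % m * m + j.val % m, ht0lt⟩ with ht0
      have ht0mod : (t0 : ℕ) % m = j.val % m := monarch_mod m _ _ hjm
      have ht0div : (t0 : ℕ) / m = k.val % m := monarch_div m _ _ hm0 hjm
      rw [Finset.sum_eq_single t0]
      · have hL : (Matrix.of fun j i : Fin (m*m) =>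
            if j.val % m = i.val % m then ω ^ (j.val * (i.val / m)) else 0) j t0
            = ω ^ (j.val * (k.val % m)) := by
          simp only [Matrix.of_apply]
          rw [if_pos ht0mod.symm, ht0div]
        have hR : (Matrix.of fun i k : Fin (m*m) =>
            if i.val / m = k.val / m then ω ^ (m * (i.val % m) * (k.val % m)) else 0) t0 i0
            = ω ^ (m * (j.val % m) * (k.val / m)) := by
          simp only [Matrix.of_apply]
          rw [if_pos (ht0div.trans hi0div.symm), ht0mod, hi0mod]
        rw [hL, hR, ← pow_add]
        have hexp : j.val * k.val
            = (j.val * (k.val % m) + m * (j.val % m) * (k.val / m))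
              + m * m * ((j.val / m) * (k.val / m)) := by
          conv_lhs => rw [(Nat.div_add_mod j.val m).symm, (Nat.div_add_mod k.val m).symm]
          rw [monarch_split, Nat.div_add_mod]
        rw [hexp, pow_add, pow_mul, hωn, one_pow, mul_one]
      · intro t _ hne
        simp only [Matrix.of_apply]
        by_cases h1 : j.val % m = t.val % m
        · by_cases h2 : t.val / m = (i0 : ℕ) / m
          · exfalso
            apply hne
            apply Fin.ext
            have hd : m * (t.val / m) + t.val % m = t.val := Nat.div_add_mod _ _
            rw [hi0div] at h2
            show t.val = k.val % m * m + j.val % m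
            rw [← hd, h2, ← h1, mul_comm]
          · rw [if_neg h2, mul_zero]
        · rw [if_neg h1, zero_mul]
      · intro h
        exact absurd (Finset.mem_univ t0) h
    · intro i _ hne
      have : permMat m (m * m) i k = 0 := by
        simp only [permMat, Matrix.of_apply, hmm]
        rw [if_neg]
        intro h
        exact hne (Fin.ext h)
      rw [this, mul_zero]
    · intro h
      exact absurd (Finset.mem_univ i0) h
end

section
/- Let n ≥ 4 be a power of 4 and let m = √n. Then every n×n circulant matrix C over ℂ (i.e., C[i,j] = c[(i − j) mod n] for some vector c ∈ ℂⁿ) belongs to the class MM*(m, n): there exist Monarch matrices M₁, M₂ ∈ M(m,n) with C = M₁ · M₂*. -/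
open Matrix

/-- The Monarch class `M(b,n) = { L·R : L ∈ DB(b,n), R ∈ BD(b,n) }`. -/
def MonarchClass (b n : ℕ) (M : Matrix (Fin n) (Fin n) ℂ) : Prop :=
  ∃ L R : Matrix (Fin n) (Fin n) ℂ, DB b n L ∧ BD b n R ∧ M = L * R

/-- Geometric sum of powers of a primitive n-th root of unity. -/
lemma zeta_sum_aux (n : ℕ) (hn : n ≠ 0) (a : ℤ) :
    ∑ r ∈ Finset.range n, (Complex.exp (2 * Real.pi * Complex.I / n)) ^ (a * (r : ℤ)) =
      if (n : ℤ) ∣ a then (n : ℂ) else 0 := by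
  set ζ := Complex.exp (2 * Real.pi * Complex.I / n) with hζdef
  have hζ : IsPrimitiveRoot ζ n := Complex.isPrimitiveRoot_exp n hn
  have hpow : ∀ r : ℕ, ζ ^ (a * (r : ℤ)) = (ζ ^ a) ^ r := by
    intro r; rw [_root_.zpow_mul, zpow_natCast]
  simp only [hpow]
  by_cases hdvd : (n : ℤ) ∣ a
  · have h1 : ζ ^ a = 1 := (hζ.zpow_eq_one_iff_dvd a).mpr hdvd
    simp [h1, hdvd]
  · have h1 : ζ ^ a ≠ 1 := fun h => hdvd ((hζ.zpow_eq_one_iff_dvd a).mp h)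
    rw [geom_sum_eq h1, if_neg hdvd]
    have hn1 : (ζ ^ a) ^ n = 1 := by
      rw [← zpow_natCast (ζ ^ a), ← _root_.zpow_mul, mul_comm, _root_.zpow_mul, zpow_natCast,
        hζ.pow_eq_one, _root_.one_zpow]
    rw [hn1]
    simp

/-- Expansion of a product exponent via division with remainder. -/
lemma exp_expand_aux (m i a b : ℕ) :
    i * (a + b * m) = (m * (i / m) * a + i % m * a + m * (i % m) * b) + m * m * (i / m * b) := by
  conv_lhs => rw [← Nat.div_add_mod i m]
  ring

lemma circulant_aux (m n : ℕ) (hm0 : 0 < m) (hn : n = m * m)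
    (c : Fin n → ℂ) (C : Matrix (Fin n) (Fin n) ℂ)
    (hC : ∀ i j : Fin n, C i j = c (i - j)) :
    ∃ M₁ M₂ : Matrix (Fin n) (Fin n) ℂ,
      MonarchClass m n M₁ ∧ MonarchClass m n M₂ ∧ C = M₁ * M₂ᴴ := by
  have hn0 : 0 < n := by rw [hn]; exact Nat.mul_pos hm0 hm0
  have hnC : (n : ℂ) ≠ 0 := Nat.cast_ne_zero.mpr hn0.ne'
  set ζ : ℂ := Complex.exp (2 * Real.pi * Complex.I / n) with hζdef
  have hz0 : ζ ≠ 0 := Complex.exp_ne_zero _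
  have hζn : ζ ^ n = 1 := (Complex.isPrimitiveRoot_exp n hn0.ne').pow_eq_one
  -- general bound
  have hbnd : ∀ a b : ℕ, a < m → b < m → a + b * m < n := by
    intro a b ha hb
    have h3 : (b + 1) * m ≤ m * m := Nat.mul_le_mul_right m hb
    rw [add_mul, one_mul] at h3
    rw [hn]
    linarith
  have hdiv_lt : ∀ j : Fin n, j.val / m < m :=
    fun j => Nat.div_lt_of_lt_mul (by rw [← hn]; exact j.isLt)
  -- the digit-swap permutation
  have hσbound : ∀ j : Fin n, j.val / m + j.val % m * m < n :=
    fun j => hbnd _ _ (hdiv_lt j) (Nat.mod_lt _ hm0)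
  set σ : Fin n → Fin n := fun j => ⟨j.val / m + j.val % m * m, hσbound j⟩ with hσdef
  have hσval : ∀ j : Fin n, (σ j).val = j.val / m + j.val % m * m := fun j => rfl
  have hσmod : ∀ j : Fin n, (σ j).val % m = j.val / m := by
    intro j
    rw [hσval, Nat.add_mul_mod_self_right, Nat.mod_eq_of_lt (hdiv_lt j)]
  have hσdiv : ∀ j : Fin n, (σ j).val / m = j.val % m := by
    intro j
    rw [hσval, Nat.add_mul_div_right _ _ hm0, Nat.div_eq_of_lt (hdiv_lt j), zero_add]
  have hσσ : ∀ j, σ (σ j) = j := by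
    intro j
    apply Fin.ext
    rw [hσval, hσmod, hσdiv, Nat.mod_add_div']
  have hσbij : Function.Bijective σ := Function.Involutive.bijective hσσ
  -- conjugation facts
  have hconjζ : (starRingEnd ℂ) ζ = ζ⁻¹ := by
    rw [hζdef, ← Complex.exp_conj, ← Complex.exp_neg]
    congr 1
    simp [map_div₀, Complex.conj_I, map_ofNat]
    ring
  have hconj : ∀ a : ℕ, (starRingEnd ℂ) (ζ ^ a) = ζ ^ (-(a : ℤ)) := by
    intro a
    rw [map_pow, hconjζ, inv_pow, ← zpow_natCast ζ a]
    exact (_root_.zpow_neg ζ (a : ℤ)).symm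
  -- the matrices
  set G : Matrix (Fin n) (Fin n) ℂ := fun i j => ζ ^ (i.val * (σ j).val) with hGdef
  set L : Matrix (Fin n) (Fin n) ℂ := fun i t =>
    if t.val % m = i.val % m then
      ζ ^ (m * (i.val / m) * (t.val / m) + i.val % m * (t.val / m)) else 0 with hLdef
  set R : Matrix (Fin n) (Fin n) ℂ := fun t j =>
    if t.val / m = j.val / m then ζ ^ (m * (t.val % m) * (j.val % m)) else 0 with hRdef
  have hLDB : DB m n L := by
    intro i j h
    simp only [hLdef]
    exact if_neg (fun hc => h hc.symm)
  have hRBD : BD m n R := by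
    intro i j h
    simp only [hRdef]
    exact if_neg h
  -- G = L * R
  have hGLR : G = L * R := by
    ext i j
    rw [Matrix.mul_apply]
    have hb : i.val % m + j.val / m * m < n := hbnd _ _ (Nat.mod_lt _ hm0) (hdiv_lt j)
    rw [Finset.sum_eq_single (⟨i.val % m + j.val / m * m, hb⟩ : Fin n)]
    · have h1 : (i.val % m + j.val / m * m) % m = i.val % m := by
        rw [Nat.add_mul_mod_self_right, Nat.mod_eq_of_lt (Nat.mod_lt _ hm0)]
      have h2 : (i.val % m + j.val / m * m) / m = j.val / m := by
        rw [Nat.add_mul_div_right _ _ hm0, Nat.div_eq_of_lt (Nat.mod_lt _ hm0), zero_add]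
      simp only [hLdef, hRdef, hGdef]
      rw [if_pos h1, if_pos h2, h1, h2, ← pow_add]
      have hexp : i.val * (σ j).val =
          (m * (i.val / m) * (j.val / m) + i.val % m * (j.val / m) +
            m * (i.val % m) * (j.val % m)) + m * m * (i.val / m * (j.val % m)) := by
        rw [hσval]
        exact exp_expand_aux m i.val (j.val / m) (j.val % m)
      have h3 : ζ ^ (m * m) = 1 := by rw [← hn]; exact hζn
      rw [hexp, pow_add, pow_mul, h3, one_pow, mul_one]
    · intro t _ ht
      by_cases h1 : t.val % m = i.val % m
      · by_cases h2 : t.val / m = j.val / m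
        · exfalso
          apply ht
          apply Fin.ext
          show t.val = i.val % m + j.val / m * m
          rw [← h1, ← h2, Nat.mod_add_div']
        · simp only [hRdef, if_neg h2, mul_zero]
      · simp only [hLdef, if_neg h1, zero_mul]
    · intro h; exact absurd (Finset.mem_univ _) h
  -- the diagonal of eigenvalues
  set d : Fin n → ℂ := fun t => ∑ s : Fin n, c s * (starRingEnd ℂ) (ζ ^ (s.val * (σ t).val))
    with hddef
  refine ⟨(n : ℂ)⁻¹ • (G * Matrix.diagonal d), G, ?_, ?_, ?_⟩
  · refine ⟨L, (n : ℂ)⁻¹ • (R * Matrix.diagonal d), hLDB, ?_, ?_⟩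
    · intro i j h
      rw [Matrix.smul_apply, Matrix.mul_diagonal, hRBD i j h, zero_mul, smul_zero]
    · rw [Matrix.mul_smul, ← Matrix.mul_assoc, ← hGLR]
  · exact ⟨L, R, hLDB, hRBD, hGLR⟩
  · ext i j
    rw [hC i j, Matrix.mul_apply]
    symm
    -- the geometric sum
    have hsum : ∀ a : ℤ, ∑ t : Fin n, ζ ^ (a * ((σ t).val : ℤ)) =
        if (n : ℤ) ∣ a then (n : ℂ) else 0 := by
      intro a
      calc ∑ t : Fin n, ζ ^ (a * ((σ t).val : ℤ))
          = ∑ r : Fin n, ζ ^ (a * ((r : Fin n).val : ℤ)) :=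
            hσbij.sum_comp (fun r : Fin n => ζ ^ (a * (r.val : ℤ)))
        _ = ∑ r ∈ Finset.range n, ζ ^ (a * (r : ℤ)) :=
            Fin.sum_univ_eq_sum_range (fun r : ℕ => ζ ^ (a * (r : ℤ))) n
        _ = if (n : ℤ) ∣ a then (n : ℂ) else 0 := by
            rw [hζdef]; exact zeta_sum_aux n hn0.ne' a
    -- rewrite each term of the outer sum
    have hterm : ∀ t : Fin n,
        ((n : ℂ)⁻¹ • (G * Matrix.diagonal d)) i t * Gᴴ t j
          = ∑ s : Fin n, (n : ℂ)⁻¹ * c s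
              * ζ ^ (((i.val : ℤ) - (s.val : ℤ) - (j.val : ℤ)) * ((σ t).val : ℤ)) := by
      intro t
      rw [Matrix.smul_apply, Matrix.mul_diagonal, Matrix.conjTranspose_apply, smul_eq_mul,
        ← starRingEnd_apply]
      simp only [hGdef, hddef]
      rw [Finset.mul_sum, Finset.mul_sum, Finset.sum_mul]
      apply Finset.sum_congr rfl
      intro s _
      have key : ζ ^ (i.val * (σ t).val) * (starRingEnd ℂ) (ζ ^ (s.val * (σ t).val))
          * (starRingEnd ℂ) (ζ ^ (j.val * (σ t).val))
          = ζ ^ (((i.val : ℤ) - (s.val : ℤ) - (j.val : ℤ)) * ((σ t).val : ℤ)) := by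
        rw [hconj, hconj, ← zpow_natCast ζ (i.val * (σ t).val), ← zpow_add₀ hz0,
          ← zpow_add₀ hz0]
        congr 1
        push_cast
        ring
      rw [← key]
      ring
    -- the divisibility criterion
    have hdvd_iff : ∀ s : Fin n,
        ((n : ℤ) ∣ ((i.val : ℤ) - (s.val : ℤ) - (j.val : ℤ))) ↔ s = i - j := by
      intro s
      have hv : (i - j).val = (n - j.val + i.val) % n := by rw [Fin.sub_def]
      set x := n - j.val + i.val with hx
      have hdm := Nat.div_add_mod x n
      have hxz : (x : ℤ) = (n : ℤ) - (j.val : ℤ) + (i.val : ℤ) := by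
        rw [hx]
        push_cast [Nat.cast_sub (le_of_lt j.isLt)]
        ring
      have hdmz : (n : ℤ) * ((x / n : ℕ) : ℤ) + ((x % n : ℕ) : ℤ) = (x : ℤ) := by
        exact_mod_cast hdm
      constructor
      · rintro ⟨z, hz⟩
        apply Fin.ext
        rw [hv]
        have h1 : ((x % n : ℕ) : ℤ) = (s.val : ℤ) + (n : ℤ) * (1 + z - ((x / n : ℕ) : ℤ)) := by
          linarith [hdmz, hxz, hz]
        have hsn : (s.val : ℤ) % n = (s.val : ℤ) :=
          Int.emod_eq_of_lt (Int.natCast_nonneg _) (by exact_mod_cast s.isLt)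
        have hrn : ((x % n : ℕ) : ℤ) % n = ((x % n : ℕ) : ℤ) :=
          Int.emod_eq_of_lt (Int.natCast_nonneg _) (by exact_mod_cast Nat.mod_lt x hn0)
        have h2 : ((x % n : ℕ) : ℤ) = (s.val : ℤ) := by
          calc ((x % n : ℕ) : ℤ) = ((x % n : ℕ) : ℤ) % n := hrn.symm
            _ = ((s.val : ℤ) + (n : ℤ) * (1 + z - ((x / n : ℕ) : ℤ))) % n := by rw [h1]
            _ = (s.val : ℤ) % n := by rw [Int.add_mul_emod_self_left]
            _ = (s.val : ℤ) := hsn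
        exact_mod_cast h2.symm
      · intro hs
        refine ⟨((x / n : ℕ) : ℤ) - 1, ?_⟩
        have hsv : s.val = x % n := by rw [hs, hv]
        rw [hsv]
        push_cast
        linarith [hdmz, hxz]
    -- put it together
    have hite : ∀ s : Fin n,
        (n : ℂ)⁻¹ * c s *
          (if (n : ℤ) ∣ ((i.val : ℤ) - (s.val : ℤ) - (j.val : ℤ)) then (n : ℂ) else 0)
          = if s = i - j then c s else 0 := by
      intro s
      by_cases hcase : s = i - j
      · rw [if_pos ((hdvd_iff s).mpr hcase), if_pos hcase]
        field_simp
      · rw [if_neg (fun h => hcase ((hdvd_iff s).mp h)), if_neg hcase, mul_zero]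
    calc ∑ t : Fin n, ((n : ℂ)⁻¹ • (G * Matrix.diagonal d)) i t * Gᴴ t j
        = ∑ t : Fin n, ∑ s : Fin n, (n : ℂ)⁻¹ * c s
            * ζ ^ (((i.val : ℤ) - (s.val : ℤ) - (j.val : ℤ)) * ((σ t).val : ℤ)) :=
          Finset.sum_congr rfl (fun t _ => hterm t)
      _ = ∑ s : Fin n, ∑ t : Fin n, (n : ℂ)⁻¹ * c s
            * ζ ^ (((i.val : ℤ) - (s.val : ℤ) - (j.val : ℤ)) * ((σ t).val : ℤ)) :=
          Finset.sum_comm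
      _ = ∑ s : Fin n, (n : ℂ)⁻¹ * c s *
            (if (n : ℤ) ∣ ((i.val : ℤ) - (s.val : ℤ) - (j.val : ℤ)) then (n : ℂ) else 0) := by
          refine Finset.sum_congr rfl (fun s _ => ?_)
          rw [← Finset.mul_sum, hsum]
      _ = ∑ s : Fin n, if s = i - j then c s else 0 :=
          Finset.sum_congr rfl (fun s _ => hite s)
      _ = c (i - j) := by rw [Finset.sum_ite_eq' Finset.univ (i - j) c, if_pos (Finset.mem_univ _)]

/-- for `n = 4^k ≥ 4` (so `n = m²` with `m = 2^k`), every `n × n`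
circulant matrix `C[i,j] = c[(i − j) mod n]` lies in `MM*(m, n)`: there are
Monarch matrices `M₁, M₂ ∈ M(m,n)` with `C = M₁ · M₂*`. -/
theorem circulant_in_mmstar (k : ℕ) (hk : 1 ≤ k) (m : ℕ) (hm : m = 2 ^ k)
    (c : Fin (m * m) → ℂ)
    (C : Matrix (Fin (m * m)) (Fin (m * m)) ℂ)
    (hC : ∀ i j : Fin (m * m), C i j = c (i - j)) :
    ∃ M₁ M₂ : Matrix (Fin (m * m)) (Fin (m * m)) ℂ,
      MonarchClass m (m * m) M₁ ∧ MonarchClass m (m * m) M₂ ∧ C = M₁ * M₂ᴴ := by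
  exact circulant_aux m (m * m) (by subst hm; positivity) rfl c C hC
end

section
/- Let n ≥ 4 be a power of 2 and let b ∈ (1, n) be an integer dividing n. Then { B₁ · B₂* : B₁, B₂ ∈ B^{(n)} } ⊆ MM*(b, n): every product of a butterfly matrix with the conjugate transpose of a butterfly matrix lies in the class MM*(b,n). -/
open Matrix

/-- Butterfly class `B^{(n)}` for `n = 2^k`: products `B_n · B_{n/2} · ⋯ · B_2` where
`B_{2^i} ∈ BD(2^i, n) ∩ DB(2^{i-1}, n)`. -/
def Butterfly (n k : ℕ) (M : Matrix (Fin n) (Fin n) ℂ) : Prop :=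
  ∃ B : ℕ → Matrix (Fin n) (Fin n) ℂ,
    (∀ i, 1 ≤ i → i ≤ k → BD (2 ^ i) n (B i) ∧ DB (2 ^ (i - 1)) n (B i)) ∧
    M = (((List.range k).map fun t => B (k - t)).prod)

lemma DB_one (b n : ℕ) : DB b n 1 := by
  intro i j h
  exact Matrix.one_apply_ne (fun e => h (by rw [e]))

lemma BD_one (b n : ℕ) : BD b n 1 := by
  intro i j h
  exact Matrix.one_apply_ne (fun e => h (by rw [e]))

lemma DB_mul {b n : ℕ} {A B : Matrix (Fin n) (Fin n) ℂ} (hA : DB b n A) (hB : DB b n B) :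
    DB b n (A * B) := by
  intro i j h
  rw [Matrix.mul_apply]
  apply Finset.sum_eq_zero
  intro m _
  by_cases hm : i.val % b = m.val % b
  · rw [hB m j (fun e => h (hm.trans e)), mul_zero]
  · rw [hA i m hm, zero_mul]

lemma BD_mul {b n : ℕ} {A B : Matrix (Fin n) (Fin n) ℂ} (hA : BD b n A) (hB : BD b n B) :
    BD b n (A * B) := by
  intro i j h
  rw [Matrix.mul_apply]
  apply Finset.sum_eq_zero
  intro m _
  by_cases hm : i.val / b = m.val / b
  · rw [hB m j (fun e => h (hm.trans e)), mul_zero]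
  · rw [hA i m hm, zero_mul]

lemma DB_list_prod {b n : ℕ} (l : List (Matrix (Fin n) (Fin n) ℂ))
    (h : ∀ A ∈ l, DB b n A) : DB b n l.prod := by
  induction l with
  | nil => simpa using DB_one b n
  | cons a l ih =>
    rw [List.prod_cons]
    exact DB_mul (h a (by simp)) (ih fun A hA => h A (List.mem_cons_of_mem _ hA))

lemma BD_list_prod {b n : ℕ} (l : List (Matrix (Fin n) (Fin n) ℂ))
    (h : ∀ A ∈ l, BD b n A) : BD b n l.prod := by
  induction l with
  | nil => simpa using BD_one b n
  | cons a l ih =>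
    rw [List.prod_cons]
    exact BD_mul (h a (by simp)) (ih fun A hA => h A (List.mem_cons_of_mem _ hA))

lemma DB_mono {b c n : ℕ} (hbc : b ∣ c) {A : Matrix (Fin n) (Fin n) ℂ}
    (h : DB c n A) : DB b n A := by
  intro i j hij
  refine h i j fun e => hij ?_
  rw [← Nat.mod_mod_of_dvd i.val hbc, ← Nat.mod_mod_of_dvd j.val hbc, e]

lemma BD_mono {b c n : ℕ} (hcb : c ∣ b) {A : Matrix (Fin n) (Fin n) ℂ}
    (h : BD c n A) : BD b n A := by
  intro i j hij
  refine h i j fun e => hij ?_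
  rw [← Nat.mul_div_cancel' hcb, ← Nat.div_div_eq_div_mul, ← Nat.div_div_eq_div_mul, e]

lemma butterfly_monarch {k n : ℕ} (hn : n = 2 ^ k)
    {b : ℕ} (hb : 1 < b) (hbn : b < n) (hdvd : b ∣ n)
    {M : Matrix (Fin n) (Fin n) ℂ} (hM : Butterfly n k M) :
    MonarchClass b n M := by
  obtain ⟨m, hmk, rfl⟩ := (Nat.dvd_prime_pow Nat.prime_two).mp (hn ▸ hdvd)
  have hm1 : 1 ≤ m := by
    by_contra h
    interval_cases m <;> simp_all
  have hmk' : m < k := by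
    by_contra h
    have : k ≤ m := Nat.le_of_not_lt h
    exact absurd hbn (by rw [hn]; exact not_lt.mpr (Nat.pow_le_pow_right (by norm_num) this))
  obtain ⟨B, hB, hprod⟩ := hM
  refine ⟨((List.range (k - m)).map fun t => B (k - t)).prod,
          ((List.range m).map fun s => B (m - s)).prod, ?_, ?_, ?_⟩
  · apply DB_list_prod
    intro A hA
    simp only [List.mem_map, List.mem_range] at hA
    obtain ⟨t, ht, rfl⟩ := hA
    have h1 : 1 ≤ k - t := by omega
    have h2 : k - t ≤ k := by omega
    refine DB_mono ?_ (hB (k - t) h1 h2).2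
    exact pow_dvd_pow 2 (by omega)
  · apply BD_list_prod
    intro A hA
    simp only [List.mem_map, List.mem_range] at hA
    obtain ⟨s, hs, rfl⟩ := hA
    have h1 : 1 ≤ m - s := by omega
    have h2 : m - s ≤ k := by omega
    refine BD_mono ?_ (hB (m - s) h1 h2).1
    exact pow_dvd_pow 2 (by omega)
  · rw [hprod]
    have hk' : k = (k - m) + m := by omega
    conv_lhs => rw [hk', List.range_add, List.map_append, List.prod_append]
    congr 1
    · congr 1
      apply List.map_congr_left
      intro t ht
      simp only [List.mem_range] at ht
      have e : k - m + m - t = k - t := by omega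
      rw [e]
    · rw [List.map_map]
      congr 1
      apply List.map_congr_left
      intro s hs
      simp only [List.mem_range] at hs
      simp only [Function.comp]
      have e : k - m + m - (k - m + s) = m - s := by omega
      rw [e]

/-- for `n = 2^k ≥ 4` and `b ∈ (1,n)` dividing `n`, every product
`B₁ · B₂*` of a butterfly matrix with the conjugate transpose of a butterfly matrix
lies in `MM*(b,n)`. -/
theorem bbstar_subset_mmstar (k n : ℕ) (hk : 2 ≤ k) (hn : n = 2 ^ k)
    (b : ℕ) (hb : 1 < b) (hbn : b < n) (hdvd : b ∣ n)
    (B₁ B₂ : Matrix (Fin n) (Fin n) ℂ)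
    (hB₁ : Butterfly n k B₁) (hB₂ : Butterfly n k B₂) :
    ∃ M₁ M₂ : Matrix (Fin n) (Fin n) ℂ,
      MonarchClass b n M₁ ∧ MonarchClass b n M₂ ∧ B₁ * B₂ᴴ = M₁ * M₂ᴴ := by
  exact ⟨B₁, B₂, butterfly_monarch hn hb hbn hdvd hB₁,
    butterfly_monarch hn hb hbn hdvd hB₂, rfl⟩
end
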